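/- Let p be a prime, K a field of characteristic p, G a finite p-group, and C a right ideal of KG that is not self-orthogonal. Then C * C = KG, where * denotes the Schur product of ideals. -/

import Mathlib

open MonoidAlgebra

attribute [local instance] Classical.propDecidable

/-- Coefficientwise (Schur) product on the group algebra. -/
noncomputable def schur {K G : Type*} [Semiring K] (f g : MonoidAlgebra K G) :
    MonoidAlgebra K G :=
  MonoidAlgebra.ofCoeff (Finsupp.zipWith (· * ·) (mul_zero 0) f.coeff g.coeff)

/-- `C` is a right ideal of the group algebra. -/
def IsRightIdeal {K G : Type*} [Field K] [Group G]
    (C : Submodule K (MonoidAlgebra K G)) : Prop :=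
  ∀ c ∈ C, ∀ v : MonoidAlgebra K G, c * v ∈ C

section Aux

variable {K G : Type*} [Field K] [Group G] [Fintype G]

lemma schur_mul_of (a b : MonoidAlgebra K G) (g : G) :
    schur (a * of K G g) (b * of K G g) = schur a b * of K G g := by
  ext x
  simp [schur, Finsupp.zipWith_apply, MonoidAlgebra.coeff_mul_single_apply]

lemma exists_fixed_ne_zero (p : ℕ) [Fact p.Prime] [CharP K p] (hG : IsPGroup p G)
    (A : Submodule K (MonoidAlgebra K G))
    (hA : ∀ a ∈ A, ∀ g : G, a * of K G g ∈ A)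
    {v : MonoidAlgebra K G} (hv : v ∈ A) (hv0 : v ≠ 0) :
    ∃ b ∈ A, b ≠ 0 ∧ ∀ g : G, b * of K G g = b := by
  letI : Algebra (ZMod p) K := ZMod.algebra _ _
  set s : Set (MonoidAlgebra K G) := Set.range (fun g : G => v * of K G g) with hs
  set W : Submodule (ZMod p) (MonoidAlgebra K G) := Submodule.span (ZMod p) s with hW
  have hWg : ∀ x ∈ W, ∀ g : G, x * of K G g ∈ W := by
    intro x hx g
    induction hx using Submodule.span_induction with
    | mem x hx =>
        obtain ⟨h, rfl⟩ := hx
        refine Submodule.subset_span ⟨h * g, ?_⟩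
        show v * of K G (h * g) = v * of K G h * of K G g
        rw [map_mul, mul_assoc]
    | zero => simpa using W.zero_mem
    | add x y _ _ hx hy => rw [add_mul]; exact W.add_mem hx hy
    | smul c x _ hx => rw [smul_mul_assoc]; exact W.smul_mem c hx
  have hWA : W ≤ A.restrictScalars (ZMod p) := by
    rw [hW, Submodule.span_le]
    rintro x ⟨g, rfl⟩
    exact hA v hv g
  have hvW : v ∈ W := by
    apply Submodule.subset_span
    refine ⟨1, ?_⟩
    show v * of K G 1 = v
    rw [map_one, mul_one]
  haveI : Module.Finite (ZMod p) W := FiniteDimensional.span_of_finite (ZMod p)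
    (Set.finite_range _)
  haveI : Finite ↥W := Module.finite_of_finite (ZMod p)
  haveI : Fintype ↥W := Fintype.ofFinite _
  haveI : Nontrivial ↥W := ⟨⟨v, hvW⟩, 0, by simpa using hv0⟩
  have hcard : p ∣ Nat.card ↥W := by
    rw [Nat.card_eq_fintype_card, Module.card_eq_pow_finrank (K := ZMod p) (V := ↥W), ZMod.card]
    exact dvd_pow_self p Module.finrank_pos.ne'
  letI : MulAction G ↥W :=
    { smul := fun g w => ⟨(w : MonoidAlgebra K G) * of K G g⁻¹, hWg _ w.2 _⟩
      one_smul := fun w => by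
        apply Subtype.ext
        show (w : MonoidAlgebra K G) * of K G 1⁻¹ = w
        rw [inv_one, map_one, mul_one]
      mul_smul := fun g h w => by
        apply Subtype.ext
        show (w : MonoidAlgebra K G) * of K G (g * h)⁻¹
          = ((w : MonoidAlgebra K G) * of K G h⁻¹) * of K G g⁻¹
        rw [mul_inv_rev, map_mul, mul_assoc] }
  have h0 : (0 : ↥W) ∈ MulAction.fixedPoints G ↥W := by
    intro g
    apply Subtype.ext
    show (0 : MonoidAlgebra K G) * of K G g⁻¹ = 0
    simp
  obtain ⟨b, hbfix, hb0⟩ := hG.exists_fixed_point_of_prime_dvd_card_of_fixed_point ↥W hcard h0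
  refine ⟨(b : MonoidAlgebra K G), hWA b.2, ?_, ?_⟩
  · intro h
    exact hb0 (Subtype.ext h.symm)
  · intro g
    have := hbfix g⁻¹
    have h2 : (b : MonoidAlgebra K G) * of K G g⁻¹⁻¹ = b := congrArg Subtype.val this
    rwa [inv_inv] at h2

end Aux

/-- For a `p`-group `G` in characteristic `p`: if the right ideal `C` is not
self-orthogonal, then `C * C = KG`. -/
theorem stmt18 {K G : Type*} [Field K] [Group G] [Fintype G]
    (p : ℕ) [Fact p.Prime] [CharP K p] (hG : IsPGroup p G)
    (C : Submodule K (MonoidAlgebra K G)) (hI : IsRightIdeal C)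
    (hno : ∃ c ∈ C, ∃ c' ∈ C, ∑ g : G, c.coeff g * c'.coeff g ≠ 0) :
    Submodule.span K
      {x : MonoidAlgebra K G | ∃ a ∈ C, ∃ b ∈ C, x = schur a b} = ⊤ := by
  classical
  set gens : Set (MonoidAlgebra K G) := {x | ∃ a ∈ C, ∃ b ∈ C, x = schur a b} with hgens
  set S : Submodule K (MonoidAlgebra K G) := Submodule.span K gens with hSdef
  obtain ⟨c, hc, c', hc', hcc⟩ := hno
  set u : MonoidAlgebra K G := schur c c' with hu
  have huS : u ∈ S := Submodule.subset_span ⟨c, hc, c', hc', rfl⟩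
  -- S is closed under right multiplication by group elements
  have hSg : ∀ x ∈ S, ∀ g : G, x * of K G g ∈ S := by
    intro x hx g
    have : S ≤ S.comap (LinearMap.mulRight K (of K G g)) := by
      rw [hSdef, Submodule.span_le]
      rintro y ⟨a, ha, b, hb, rfl⟩
      exact Submodule.subset_span ⟨a * of K G g, hI a ha _, b * of K G g, hI b hb _,
        (schur_mul_of a b g).symm⟩
    exact this hx
  -- hence by arbitrary elements
  have hSv : ∀ x ∈ S, ∀ v : MonoidAlgebra K G, x * v ∈ S := by
    intro x hx v
    have hv : x * v = ∑ g ∈ v.coeff.support, v.coeff g • (x * of K G g) := by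
      conv_lhs => rw [← MonoidAlgebra.sum_coeff_single v]
      rw [Finsupp.sum, Finset.mul_sum]
      refine Finset.sum_congr rfl fun g _ => ?_
      rw [← mul_smul_comm]
      congr 1
      show (MonoidAlgebra.single g (v.coeff g) : MonoidAlgebra K G) = v.coeff g • MonoidAlgebra.single g 1
      rw [MonoidAlgebra.smul_single', mul_one]
    rw [hv]
    exact Submodule.sum_mem _ fun g _ => Submodule.smul_mem _ _ (hSg x hx g)
  -- epsilon of u is nonzero
  have heps : ∑ g : G, u.coeff g ≠ 0 := by
    have : ∀ g : G, u.coeff g = c.coeff g * c'.coeff g := fun g => rfl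
    simpa [this] using hcc
  -- left multiplication by u is injective
  have hker : ∀ v : MonoidAlgebra K G, u * v = 0 → v = 0 := by
    intro v huv
    by_contra hv0
    set A : Submodule K (MonoidAlgebra K G) := LinearMap.ker (LinearMap.mulLeft K u) with hAdef
    have hA : ∀ a ∈ A, ∀ g : G, a * of K G g ∈ A := by
      intro a ha g
      have h1 : u * a = 0 := ha
      show u * (a * of K G g) = 0
      rw [← mul_assoc, h1, zero_mul]
    have hvA : v ∈ A := huv
    obtain ⟨b, hbA, hb0, hbfix⟩ := exists_fixed_ne_zero p hG A hA hvA hv0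
    -- b is constant
    have hconst : ∀ x : G, b.coeff x = b.coeff 1 := by
      intro x
      have h := congrArg (fun f : MonoidAlgebra K G => f.coeff 1) (hbfix x⁻¹)
      simp only [MonoidAlgebra.of_apply, MonoidAlgebra.coeff_mul_single_apply, inv_inv, one_mul,
        mul_one] at h
      exact h
    have hb1 : b.coeff 1 ≠ 0 := by
      intro h
      apply hb0
      ext x
      rw [hconst x, h]; rfl
    have hub : u * b = 0 := hbA
    have h0 : (0 : K) = (∑ g : G, u.coeff g) * b.coeff 1 := by
      calc (0 : K) = (u * b).coeff 1 := by rw [hub]; rfl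
        _ = ∑ a ∈ u.coeff.support, u.coeff a * b.coeff (a⁻¹ * 1) := by
              rw [MonoidAlgebra.coeff_mul_apply_left, Finsupp.sum]
        _ = ∑ a ∈ u.coeff.support, u.coeff a * b.coeff 1 := Finset.sum_congr rfl fun a _ => by rw [hconst]
        _ = ∑ g : G, u.coeff g * b.coeff 1 := Finset.sum_subset (Finset.subset_univ _)
              (fun g _ hg => by rw [Finsupp.notMem_support_iff.mp hg, zero_mul])
        _ = (∑ g : G, u.coeff g) * b.coeff 1 := (Finset.sum_mul _ _ _).symm
    exact mul_ne_zero heps hb1 h0.symm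
  have hinj : Function.Injective (LinearMap.mulLeft K u) := by
    rw [← LinearMap.ker_eq_bot, LinearMap.ker_eq_bot']
    intro m hm
    exact hker m hm
  haveI : Module.Finite K (MonoidAlgebra K G) :=
    Module.Finite.equiv ((Finsupp.linearEquivFunOnFinite K K G).symm.trans (MonoidAlgebra.coeffLinearEquiv K).symm)
  have hsurj : Function.Surjective (LinearMap.mulLeft K u) :=
    (LinearMap.injective_iff_surjective).mp hinj
  obtain ⟨w, hw⟩ := hsurj 1
  rw [LinearMap.mulLeft_apply] at hw
  rw [eq_top_iff]
  intro x _
  have hx : u * (w * x) ∈ S := hSv u huS (w * x)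
  rwa [← mul_assoc, hw, one_mul] at hx
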